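/- Fix 1 ≤ t ≤ T, and suppose x_t ∈ X minimizes ∑_{τ=1}^{t−1} ℓ_τ(x) over x ∈ X and x_{t+1} ∈ X minimizes ∑_{τ=1}^{t} ℓ_τ(x) over x ∈ X. Then ℓ_t(x_t) − ℓ_t(x_{t+1}) ≥ (α/2)·(2t − 1)·‖x_t − x_{t+1}‖². -/

import Mathlib

/-- Quadratic growth at a minimizer of a function satisfying a strong-convexity
type inequality on a convex set. -/
lemma min_quad_growth {E : Type*} [NormedAddCommGroup E] [NormedSpace ℝ E]
    {X : Set E} (hXconv : Convex ℝ X) {F : E → ℝ} {μ : ℝ} (hμ : 0 ≤ μ)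
    (hF : ∀ ⦃x⦄, x ∈ X → ∀ ⦃y⦄, y ∈ X → ∀ ⦃a b : ℝ⦄, 0 ≤ a → 0 ≤ b → a + b = 1 →
      F (a • x + b • y) ≤ a * F x + b * F y - a * b * (μ / 2 * ‖x - y‖ ^ 2))
    {xs : E} (hxs : xs ∈ X) (hmin : ∀ y ∈ X, F xs ≤ F y) :
    ∀ y ∈ X, F xs + μ / 2 * ‖y - xs‖ ^ 2 ≤ F y := by
  intro y hy
  set C : ℝ := μ / 2 * ‖y - xs‖ ^ 2 with hC
  have hC0 : 0 ≤ C := by positivity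
  refine le_of_forall_pos_le_add fun ε hε => ?_
  set a : ℝ := ε / (C + ε) with ha
  have hCε : 0 < C + ε := by linarith
  have ha0 : 0 < a := div_pos hε hCε
  set b : ℝ := C / (C + ε) with hb
  have hb0 : 0 ≤ b := div_nonneg hC0 hCε.le
  have hab : a + b = 1 := by rw [ha, hb, ← add_div, add_comm ε C, div_self hCε.ne']
  have hmem : a • y + b • xs ∈ X := hXconv hy hxs ha0.le hb0 hab
  have h1 : F xs ≤ F (a • y + b • xs) := hmin _ hmem
  have h2 := hF hy hxs ha0.le hb0 hab
  -- a*F y ≥ a*F xs + a*b*C, so F y ≥ F xs + b*C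
  have hb' : b = 1 - a := by linarith
  have h12 : F xs ≤ a * F y + b * F xs - a * b * C := hC ▸ h1.trans h2
  have h3 : F xs + b * C ≤ F y := by
    have h4 : a * (F xs + b * C) ≤ a * F y := by rw [hb'] at h12 ⊢; nlinarith [h12]
    exact le_of_mul_le_mul_left h4 ha0
  have haC : a * C ≤ ε := by
    rw [ha, div_mul_eq_mul_div, div_le_iff₀ hCε]
    nlinarith
  have hbC : C - ε ≤ b * C := by
    have h5 : b * C = C - a * C := by rw [hb']; ring
    linarith
  linarith

/-- A finite sum of `α`-strongly convex functions satisfies the strong convexity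
inequality with modulus `card • α`. -/
lemma sum_strong_ineq {E : Type*} [NormedAddCommGroup E] [NormedSpace ℝ E]
    {X : Set E} {α : ℝ} {ι : Type*} (s : Finset ι) {f : ι → E → ℝ}
    (h : ∀ i ∈ s, StrongConvexOn X α (f i)) :
    ∀ ⦃x⦄, x ∈ X → ∀ ⦃y⦄, y ∈ X → ∀ ⦃a b : ℝ⦄, 0 ≤ a → 0 ≤ b → a + b = 1 →
      (∑ i ∈ s, f i (a • x + b • y)) ≤ a * (∑ i ∈ s, f i x) + b * (∑ i ∈ s, f i y)
        - a * b * (((s.card : ℝ) * α) / 2 * ‖x - y‖ ^ 2) := by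
  intro x hx y hy a b ha hb hab
  have := Finset.sum_le_sum (s := s)
    (f := fun i => f i (a • x + b • y))
    (g := fun i => a * f i x + b * f i y - a * b * (α / 2 * ‖x - y‖ ^ 2))
    (fun i hi => by simpa [smul_eq_mul] using (h i hi).2 hx hy ha hb hab)
  calc (∑ i ∈ s, f i (a • x + b • y))
      ≤ ∑ i ∈ s, (a * f i x + b * f i y - a * b * (α / 2 * ‖x - y‖ ^ 2)) := this
    _ = a * (∑ i ∈ s, f i x) + b * (∑ i ∈ s, f i y)
        - a * b * (((s.card : ℝ) * α) / 2 * ‖x - y‖ ^ 2) := by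
        rw [Finset.sum_sub_distrib, Finset.sum_add_distrib, ← Finset.mul_sum, ← Finset.mul_sum,
          Finset.sum_const, nsmul_eq_mul]
        ring

/-- **FTL one-step strong-convexity bound.**
If each `ℓ τ` is `α`-strongly convex on the nonempty convex set `X ⊆ ℝ^d`,
`x t ∈ X` minimizes `∑_{τ=1}^{t-1} ℓ τ` over `X` and `x (t+1) ∈ X` minimizes
`∑_{τ=1}^{t} ℓ τ` over `X`, then
`ℓ t (x t) - ℓ t (x (t+1)) ≥ (α/2) (2t - 1) ‖x t - x (t+1)‖²`. -/
theorem ftl_strong_convexity_gap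
    {d : ℕ} (X : Set (EuclideanSpace ℝ (Fin d)))
    (hXne : X.Nonempty) (hXconv : Convex ℝ X)
    (α : ℝ) (hα : 0 < α)
    (T : ℕ) (ℓ : ℕ → EuclideanSpace ℝ (Fin d) → ℝ)
    (hsc : ∀ τ ∈ Finset.Icc 1 T, StrongConvexOn X α (ℓ τ))
    (t : ℕ) (ht1 : 1 ≤ t) (htT : t ≤ T)
    (xt xt1 : EuclideanSpace ℝ (Fin d)) (hxt : xt ∈ X) (hxt1 : xt1 ∈ X)
    (hxtmin : ∀ y ∈ X, ∑ τ ∈ Finset.Icc 1 (t - 1), ℓ τ xt ≤ ∑ τ ∈ Finset.Icc 1 (t - 1), ℓ τ y)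
    (hxt1min : ∀ y ∈ X, ∑ τ ∈ Finset.Icc 1 t, ℓ τ xt1 ≤ ∑ τ ∈ Finset.Icc 1 t, ℓ τ y) :
    α / 2 * (2 * (t : ℝ) - 1) * ‖xt - xt1‖ ^ 2 ≤ ℓ t xt - ℓ t xt1 := by
  have hsc1 : ∀ τ ∈ Finset.Icc 1 (t - 1), StrongConvexOn X α (ℓ τ) := by
    intro τ hτ
    rw [Finset.mem_Icc] at hτ
    exact hsc τ (Finset.mem_Icc.2 ⟨hτ.1, hτ.2.trans ((Nat.sub_le t 1).trans htT)⟩)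
  have hsc2 : ∀ τ ∈ Finset.Icc 1 t, StrongConvexOn X α (ℓ τ) := by
    intro τ hτ
    rw [Finset.mem_Icc] at hτ
    exact hsc τ (Finset.mem_Icc.2 ⟨hτ.1, hτ.2.trans htT⟩)
  have hcard1 : ((Finset.Icc 1 (t - 1)).card : ℝ) = (t : ℝ) - 1 := by
    rw [Nat.card_Icc, Nat.sub_add_cancel ht1, Nat.cast_sub ht1, Nat.cast_one]
  have hcard2 : ((Finset.Icc 1 t).card : ℝ) = (t : ℝ) := by
    rw [Nat.card_Icc]; push_cast; ring
  have ht1R : (1 : ℝ) ≤ (t : ℝ) := by exact_mod_cast ht1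
  -- growth at xt for F_{t-1}
  have key1 := min_quad_growth hXconv
    (F := fun z => ∑ τ ∈ Finset.Icc 1 (t - 1), ℓ τ z)
    (μ := ((Finset.Icc 1 (t - 1)).card : ℝ) * α)
    (by positivity) (sum_strong_ineq _ hsc1) hxt hxtmin xt1 hxt1
  -- growth at xt1 for F_t
  have key2 := min_quad_growth hXconv
    (F := fun z => ∑ τ ∈ Finset.Icc 1 t, ℓ τ z)
    (μ := ((Finset.Icc 1 t).card : ℝ) * α)
    (by positivity) (sum_strong_ineq _ hsc2) hxt1 hxt1min xt hxt
  -- split the sum over Icc 1 t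
  have hsplit : ∀ z, (∑ τ ∈ Finset.Icc 1 t, ℓ τ z)
      = (∑ τ ∈ Finset.Icc 1 (t - 1), ℓ τ z) + ℓ t z := by
    intro z
    obtain ⟨s, rfl⟩ := Nat.exists_eq_succ_of_ne_zero (by omega : t ≠ 0)
    rw [Finset.sum_Icc_succ_top (by omega : 1 ≤ s + 1), Nat.succ_sub_one]
  simp only [hcard1, hcard2, norm_sub_rev xt1 xt] at key1 key2
  rw [hsplit xt1, hsplit xt] at key2
  nlinarith [key1, key2, sq_nonneg ‖xt - xt1‖]
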